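/- Composition distributes over sum for fuzzy left ideals of a Γ-semiring: μ₁∘(μ₂⊕μ₃) = (μ₁∘μ₂)⊕(μ₁∘μ₃) and (μ₂⊕μ₃)∘μ₁ = (μ₂∘μ₁)⊕(μ₃∘μ₁). -/
import Mathlib


open Classical

/-- A Γ-semiring: additive commutative monoids `S` and `G` with a triadditive,
associative product `tmul : S → G → S → S` for which zero is absorbing. -/
class GammaSemiring (S : Type*) (G : Type*) [AddCommMonoid S] [AddCommMonoid G] where
  tmul : S → G → S → S
  add_tmul : ∀ (a b : S) (γ : G) (c : S), tmul (a + b) γ c = tmul a γ c + tmul b γ c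
  tmul_add : ∀ (a : S) (γ : G) (b c : S), tmul a γ (b + c) = tmul a γ b + tmul a γ c
  tmul_gadd : ∀ (a : S) (γ δ : G) (b : S), tmul a (γ + δ) b = tmul a γ b + tmul a δ b
  tmul_assoc : ∀ (a : S) (γ : G) (b : S) (δ : G) (c : S),
      tmul a γ (tmul b δ c) = tmul (tmul a γ b) δ c
  zero_tmul : ∀ (γ : G) (x : S), tmul 0 γ x = 0
  tmul_zero : ∀ (x : S) (γ : G), tmul x γ 0 = 0
  tmul_gzero : ∀ (x y : S), tmul x 0 y = 0

/-- μ is a fuzzy left ideal: `[0,1]`-valued, `μ 0 = 1`, superadditive under `min`,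
and `μ (xγy) ≥ μ y`. -/
def IsFuzzyLeftIdeal (S G : Type*) [AddCommMonoid S] [AddCommMonoid G]
    [GammaSemiring S G] (μ : S → ℝ) : Prop :=
  (∀ x, μ x ∈ Set.Icc (0 : ℝ) 1) ∧ μ 0 = 1 ∧
  (∀ x y, min (μ x) (μ y) ≤ μ (x + y)) ∧
  (∀ (x : S) (γ : G) (y : S), μ y ≤ μ (GammaSemiring.tmul x γ y))

/-- μ is a fuzzy right ideal. -/
def IsFuzzyRightIdeal (S G : Type*) [AddCommMonoid S] [AddCommMonoid G]
    [GammaSemiring S G] (μ : S → ℝ) : Prop :=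
  (∀ x, μ x ∈ Set.Icc (0 : ℝ) 1) ∧ μ 0 = 1 ∧
  (∀ x y, min (μ x) (μ y) ≤ μ (x + y)) ∧
  (∀ (x : S) (γ : G) (y : S), μ x ≤ μ (GammaSemiring.tmul x γ y))

/-- μ is a fuzzy (two-sided) ideal. -/
def IsFuzzyIdeal (S G : Type*) [AddCommMonoid S] [AddCommMonoid G]
    [GammaSemiring S G] (μ : S → ℝ) : Prop :=
  (∀ x, μ x ∈ Set.Icc (0 : ℝ) 1) ∧ μ 0 = 1 ∧
  (∀ x y, min (μ x) (μ y) ≤ μ (x + y)) ∧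
  (∀ (x : S) (γ : G) (y : S), max (μ x) (μ y) ≤ μ (GammaSemiring.tmul x γ y))

/-- The sum `μ ⊕ ν` of fuzzy subsets: `(μ ⊕ ν)(x) = sup { min (μ u) (ν v) : x = u + v }`. -/
noncomputable def fSum {S : Type*} [AddCommMonoid S] (μ ν : S → ℝ) : S → ℝ := fun x =>
  sSup {r : ℝ | ∃ u v : S, x = u + v ∧ r = min (μ u) (ν v)}

/-- The product `μ Γ ν`: `(μ Γ ν)(x) = sup { min (μ u) (ν v) : x = uγv }`
(`sSup ∅ = 0` in `ℝ`, matching the convention that it is `0` with no representation). -/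
noncomputable def fProd (S G : Type*) [AddCommMonoid S] [AddCommMonoid G]
    [GammaSemiring S G] (μ ν : S → ℝ) : S → ℝ := fun x =>
  sSup {r : ℝ | ∃ (u : S) (γ : G) (v : S),
    x = GammaSemiring.tmul u γ v ∧ r = min (μ u) (ν v)}

/-- The composition `μ ∘ ν`:
`(μ ∘ ν)(x) = sup { min_{1 ≤ i ≤ n} min (μ uᵢ) (ν vᵢ) : x = Σᵢ uᵢγᵢvᵢ, n ≥ 1 }`. -/
noncomputable def fComp (S G : Type*) [AddCommMonoid S] [AddCommMonoid G]
    [GammaSemiring S G] (μ ν : S → ℝ) : S → ℝ := fun x =>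
  sSup {r : ℝ | ∃ (n : ℕ) (u v : Fin (n + 1) → S) (γ : Fin (n + 1) → G),
    x = ∑ i, GammaSemiring.tmul (u i) (γ i) (v i) ∧
    r = Finset.univ.inf' Finset.univ_nonempty (fun i => min (μ (u i)) (ν (v i)))}


section AuxDistrib

variable {S G : Type*} [AddCommMonoid S] [AddCommMonoid G] [GammaSemiring S G]

open GammaSemiring

lemma fComp_bdd (μ ν : S → ℝ) (hμ : ∀ x, μ x ≤ 1) (x : S) :
    BddAbove {r : ℝ | ∃ (n : ℕ) (u v : Fin (n + 1) → S) (γ : Fin (n + 1) → G),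
      x = ∑ i, GammaSemiring.tmul (u i) (γ i) (v i) ∧
      r = Finset.univ.inf' Finset.univ_nonempty (fun i => min (μ (u i)) (ν (v i)))} := by
  refine ⟨1, fun r hr => ?_⟩
  obtain ⟨n, u, v, γ, -, rfl⟩ := hr
  exact le_trans (Finset.inf'_le _ (Finset.mem_univ 0)) (le_trans (min_le_left _ _) (hμ _))

lemma fComp_nonneg (μ ν : S → ℝ) (hμ : ∀ x, 0 ≤ μ x) (hν : ∀ x, 0 ≤ ν x) (x : S) :
    0 ≤ fComp S G μ ν x := by
  apply Real.sSup_nonneg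
  rintro r ⟨n, u, v, γ, -, rfl⟩
  exact Finset.le_inf' _ _ fun i _ => le_min (hμ _) (hν _)

lemma fComp_le_one (μ ν : S → ℝ) (hμ : ∀ x, μ x ≤ 1) (x : S) : fComp S G μ ν x ≤ 1 := by
  apply Real.sSup_le _ zero_le_one
  rintro r ⟨n, u, v, γ, -, rfl⟩
  exact le_trans (Finset.inf'_le _ (Finset.mem_univ 0)) (le_trans (min_le_left _ _) (hμ _))

lemma fSum_bdd (μ ν : S → ℝ) (hμ : ∀ x, μ x ≤ 1) (x : S) :
    BddAbove {r : ℝ | ∃ u v : S, x = u + v ∧ r = min (μ u) (ν v)} := by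
  refine ⟨1, fun r hr => ?_⟩
  obtain ⟨u, v, -, rfl⟩ := hr
  exact le_trans (min_le_left _ _) (hμ _)

lemma fSum_nonneg (μ ν : S → ℝ) (hμ : ∀ x, 0 ≤ μ x) (hν : ∀ x, 0 ≤ ν x) (x : S) :
    0 ≤ fSum μ ν x := by
  apply Real.sSup_nonneg
  rintro r ⟨u, v, -, rfl⟩
  exact le_min (hμ _) (hν _)

lemma fSum_le_one (μ ν : S → ℝ) (hμ : ∀ x, μ x ≤ 1) (x : S) : fSum μ ν x ≤ 1 := by
  apply Real.sSup_le _ zero_le_one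
  rintro r ⟨u, v, -, rfl⟩
  exact le_trans (min_le_left _ _) (hμ _)

lemma le_fSum_left (μ ν : S → ℝ) (hμ : ∀ x, μ x ≤ 1) (hν0 : ν 0 = 1) (a : S) :
    μ a ≤ fSum μ ν a := by
  refine le_csSup (fSum_bdd μ ν hμ a) ⟨a, 0, (add_zero a).symm, ?_⟩
  rw [hν0, min_eq_left (hμ a)]

lemma le_fSum_right (μ ν : S → ℝ) (hμ : ∀ x, μ x ≤ 1) (hν : ∀ x, ν x ≤ 1)
    (hμ0 : μ 0 = 1) (b : S) : ν b ≤ fSum μ ν b := by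
  refine le_csSup (fSum_bdd μ ν hμ b) ⟨0, b, (zero_add b).symm, ?_⟩
  rw [hμ0, min_eq_right (hν b)]

lemma key_left (μ μ₂ μ₃ : S → ℝ)
    (hμ : ∀ x, μ x ∈ Set.Icc (0:ℝ) 1)
    (h2 : ∀ x, μ₂ x ∈ Set.Icc (0:ℝ) 1) (h3 : ∀ x, μ₃ x ∈ Set.Icc (0:ℝ) 1)
    (h20 : μ₂ 0 = 1) (h30 : μ₃ 0 = 1) :
    fComp S G μ (fSum μ₂ μ₃) = fSum (fComp S G μ μ₂) (fComp S G μ μ₃) := by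
  have hμ0 : ∀ x, 0 ≤ μ x := fun x => (hμ x).1
  have hμ1 : ∀ x, μ x ≤ 1 := fun x => (hμ x).2
  have h2n : ∀ x, 0 ≤ μ₂ x := fun x => (h2 x).1
  have h21 : ∀ x, μ₂ x ≤ 1 := fun x => (h2 x).2
  have h3n : ∀ x, 0 ≤ μ₃ x := fun x => (h3 x).1
  have h31 : ∀ x, μ₃ x ≤ 1 := fun x => (h3 x).2
  have hσ0 : ∀ x, 0 ≤ fSum μ₂ μ₃ x := fSum_nonneg μ₂ μ₃ h2n h3n
  have hσ1 : ∀ x, fSum μ₂ μ₃ x ≤ 1 := fSum_le_one μ₂ μ₃ h21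
  funext x
  apply le_antisymm
  · apply Real.sSup_le
    · rintro r ⟨n, u, v, γ, hx, rfl⟩
      apply le_of_forall_lt
      intro t ht
      rcases lt_or_ge t 0 with h | h
      · exact lt_of_lt_of_le h (fSum_nonneg _ _
          (fComp_nonneg μ μ₂ hμ0 h2n) (fComp_nonneg μ μ₃ hμ0 h3n) x)
      · have hti : ∀ i : Fin (n+1), t < min (μ (u i)) (fSum μ₂ μ₃ (v i)) :=
          fun i => (Finset.lt_inf'_iff _).mp ht i (Finset.mem_univ i)
        have H : ∀ i : Fin (n+1), ∃ a b : S, v i = a + b ∧ t < min (μ₂ a) (μ₃ b) := by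
          intro i
          have h1 : t < fSum μ₂ μ₃ (v i) := lt_of_lt_of_le (hti i) (min_le_right _ _)
          have hne : Set.Nonempty {r : ℝ | ∃ a b : S, v i = a + b ∧ r = min (μ₂ a) (μ₃ b)} :=
            ⟨_, v i, 0, (add_zero _).symm, rfl⟩
          obtain ⟨r', hr', htr⟩ := exists_lt_of_lt_csSup hne h1
          obtain ⟨a, b, hab, rfl⟩ := hr'
          exact ⟨a, b, hab, htr⟩
        choose a b hab hlt using H
        have hxyz : x = (∑ i, GammaSemiring.tmul (u i) (γ i) (a i))
            + ∑ i, GammaSemiring.tmul (u i) (γ i) (b i) := by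
          rw [hx, ← Finset.sum_add_distrib]
          exact Finset.sum_congr rfl fun i _ => by rw [hab i, GammaSemiring.tmul_add]
        have hty : t < fComp S G μ μ₂ (∑ i, GammaSemiring.tmul (u i) (γ i) (a i)) := by
          refine lt_of_lt_of_le ?_ (le_csSup (fComp_bdd μ μ₂ hμ1 _) ⟨n, u, a, γ, rfl, rfl⟩)
          refine (Finset.lt_inf'_iff _).mpr fun i _ => lt_min ?_ ?_
          · exact lt_of_lt_of_le (hti i) (min_le_left _ _)
          · exact lt_of_lt_of_le (hlt i) (min_le_left _ _)
        have htz : t < fComp S G μ μ₃ (∑ i, GammaSemiring.tmul (u i) (γ i) (b i)) := by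
          refine lt_of_lt_of_le ?_ (le_csSup (fComp_bdd μ μ₃ hμ1 _) ⟨n, u, b, γ, rfl, rfl⟩)
          refine (Finset.lt_inf'_iff _).mpr fun i _ => lt_min ?_ ?_
          · exact lt_of_lt_of_le (hti i) (min_le_left _ _)
          · exact lt_of_lt_of_le (hlt i) (min_le_right _ _)
        refine lt_of_lt_of_le (lt_min hty htz) ?_
        exact le_csSup (fSum_bdd _ _ (fComp_le_one μ μ₂ hμ1) x) ⟨_, _, hxyz, rfl⟩
    · exact fSum_nonneg _ _ (fComp_nonneg μ μ₂ hμ0 h2n) (fComp_nonneg μ μ₃ hμ0 h3n) x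
  · apply Real.sSup_le
    · rintro w ⟨y, z, hxyz, rfl⟩
      apply le_of_forall_lt
      intro t ht
      rcases lt_or_ge t 0 with h | h
      · exact lt_of_lt_of_le h (fComp_nonneg μ (fSum μ₂ μ₃) hμ0 hσ0 x)
      · have hty : t < fComp S G μ μ₂ y := lt_of_lt_of_le ht (min_le_left _ _)
        have htz : t < fComp S G μ μ₃ z := lt_of_lt_of_le ht (min_le_right _ _)
        have hney : Set.Nonempty {r : ℝ | ∃ (n : ℕ) (u v : Fin (n + 1) → S) (γ : Fin (n + 1) → G),
            y = ∑ i, GammaSemiring.tmul (u i) (γ i) (v i) ∧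
            r = Finset.univ.inf' Finset.univ_nonempty (fun i => min (μ (u i)) (μ₂ (v i)))} := by
          by_contra hc
          rw [Set.not_nonempty_iff_eq_empty] at hc
          have : fComp S G μ μ₂ y = 0 := by
            show sSup _ = 0
            rw [hc, Real.sSup_empty]
          rw [this] at hty; linarith
        have hnez : Set.Nonempty {r : ℝ | ∃ (n : ℕ) (u v : Fin (n + 1) → S) (γ : Fin (n + 1) → G),
            z = ∑ i, GammaSemiring.tmul (u i) (γ i) (v i) ∧
            r = Finset.univ.inf' Finset.univ_nonempty (fun i => min (μ (u i)) (μ₃ (v i)))} := by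
          by_contra hc
          rw [Set.not_nonempty_iff_eq_empty] at hc
          have : fComp S G μ μ₃ z = 0 := by
            show sSup _ = 0
            rw [hc, Real.sSup_empty]
          rw [this] at htz; linarith
        obtain ⟨ry, hry, htry⟩ := exists_lt_of_lt_csSup hney hty
        obtain ⟨n₁, u₁, a₁, γ₁, hyrep, rfl⟩ := hry
        obtain ⟨rz, hrz, htrz⟩ := exists_lt_of_lt_csSup hnez htz
        obtain ⟨n₂, u₂, a₂, γ₂, hzrep, rfl⟩ := hrz
        have hcast : (n₁ + n₂ + 1) + 1 = (n₁ + 1) + (n₂ + 1) := by omega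
        have hxrep : x = ∑ i : Fin ((n₁ + n₂ + 1) + 1),
            GammaSemiring.tmul (Fin.append u₁ u₂ (Fin.cast hcast i))
              (Fin.append γ₁ γ₂ (Fin.cast hcast i)) (Fin.append a₁ a₂ (Fin.cast hcast i)) := by
          rw [Fin.sum_congr' (fun j : Fin ((n₁+1)+(n₂+1)) =>
            GammaSemiring.tmul (Fin.append u₁ u₂ j) (Fin.append γ₁ γ₂ j) (Fin.append a₁ a₂ j)) hcast]
          rw [Fin.sum_univ_add]
          simp only [Fin.append_left, Fin.append_right]
          rw [hxyz, hyrep, hzrep]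
        have hkey : ∀ j : Fin ((n₁+1)+(n₂+1)),
            t < min (μ (Fin.append u₁ u₂ j)) (fSum μ₂ μ₃ (Fin.append a₁ a₂ j)) := by
          intro j
          refine Fin.addCases (fun i => ?_) (fun i => ?_) j
          · simp only [Fin.append_left]
            have h1 : t < min (μ (u₁ i)) (μ₂ (a₁ i)) :=
              (Finset.lt_inf'_iff _).mp htry i (Finset.mem_univ i)
            refine lt_min (lt_of_lt_of_le h1 (min_le_left _ _)) ?_
            exact lt_of_lt_of_le (lt_of_lt_of_le h1 (min_le_right _ _))
              (le_fSum_left μ₂ μ₃ h21 h30 (a₁ i))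
          · simp only [Fin.append_right]
            have h1 : t < min (μ (u₂ i)) (μ₃ (a₂ i)) :=
              (Finset.lt_inf'_iff _).mp htrz i (Finset.mem_univ i)
            refine lt_min (lt_of_lt_of_le h1 (min_le_left _ _)) ?_
            exact lt_of_lt_of_le (lt_of_lt_of_le h1 (min_le_right _ _))
              (le_fSum_right μ₂ μ₃ h21 h31 h20 (a₂ i))
        refine lt_of_lt_of_le ?_ (le_csSup (fComp_bdd μ (fSum μ₂ μ₃) hμ1 x)
          ⟨n₁ + n₂ + 1, _, _, _, hxrep, rfl⟩)
        exact (Finset.lt_inf'_iff _).mpr fun i _ => hkey (Fin.cast hcast i)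
    · exact fComp_nonneg μ (fSum μ₂ μ₃) hμ0 hσ0 x

lemma key_right (μ μ₂ μ₃ : S → ℝ)
    (hμ : ∀ x, μ x ∈ Set.Icc (0:ℝ) 1)
    (h2 : ∀ x, μ₂ x ∈ Set.Icc (0:ℝ) 1) (h3 : ∀ x, μ₃ x ∈ Set.Icc (0:ℝ) 1)
    (h20 : μ₂ 0 = 1) (h30 : μ₃ 0 = 1) :
    fComp S G (fSum μ₂ μ₃) μ = fSum (fComp S G μ₂ μ) (fComp S G μ₃ μ) := by
  have hμ0 : ∀ x, 0 ≤ μ x := fun x => (hμ x).1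
  have hμ1 : ∀ x, μ x ≤ 1 := fun x => (hμ x).2
  have h2n : ∀ x, 0 ≤ μ₂ x := fun x => (h2 x).1
  have h21 : ∀ x, μ₂ x ≤ 1 := fun x => (h2 x).2
  have h3n : ∀ x, 0 ≤ μ₃ x := fun x => (h3 x).1
  have h31 : ∀ x, μ₃ x ≤ 1 := fun x => (h3 x).2
  have hσ0 : ∀ x, 0 ≤ fSum μ₂ μ₃ x := fSum_nonneg μ₂ μ₃ h2n h3n
  have hσ1 : ∀ x, fSum μ₂ μ₃ x ≤ 1 := fSum_le_one μ₂ μ₃ h21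
  funext x
  apply le_antisymm
  · apply Real.sSup_le
    · rintro r ⟨n, u, v, γ, hx, rfl⟩
      apply le_of_forall_lt
      intro t ht
      rcases lt_or_ge t 0 with h | h
      · exact lt_of_lt_of_le h (fSum_nonneg _ _
          (fComp_nonneg μ₂ μ h2n hμ0) (fComp_nonneg μ₃ μ h3n hμ0) x)
      · have hti : ∀ i : Fin (n+1), t < min (fSum μ₂ μ₃ (u i)) (μ (v i)) :=
          fun i => (Finset.lt_inf'_iff _).mp ht i (Finset.mem_univ i)
        have H : ∀ i : Fin (n+1), ∃ a b : S, u i = a + b ∧ t < min (μ₂ a) (μ₃ b) := by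
          intro i
          have h1 : t < fSum μ₂ μ₃ (u i) := lt_of_lt_of_le (hti i) (min_le_left _ _)
          have hne : Set.Nonempty {r : ℝ | ∃ a b : S, u i = a + b ∧ r = min (μ₂ a) (μ₃ b)} :=
            ⟨_, u i, 0, (add_zero _).symm, rfl⟩
          obtain ⟨r', hr', htr⟩ := exists_lt_of_lt_csSup hne h1
          obtain ⟨a, b, hab, rfl⟩ := hr'
          exact ⟨a, b, hab, htr⟩
        choose a b hab hlt using H
        have hxyz : x = (∑ i, GammaSemiring.tmul (a i) (γ i) (v i))
            + ∑ i, GammaSemiring.tmul (b i) (γ i) (v i) := by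
          rw [hx, ← Finset.sum_add_distrib]
          exact Finset.sum_congr rfl fun i _ => by rw [hab i, GammaSemiring.add_tmul]
        have hty : t < fComp S G μ₂ μ (∑ i, GammaSemiring.tmul (a i) (γ i) (v i)) := by
          refine lt_of_lt_of_le ?_ (le_csSup (fComp_bdd μ₂ μ h21 _) ⟨n, a, v, γ, rfl, rfl⟩)
          refine (Finset.lt_inf'_iff _).mpr fun i _ => lt_min ?_ ?_
          · exact lt_of_lt_of_le (hlt i) (min_le_left _ _)
          · exact lt_of_lt_of_le (hti i) (min_le_right _ _)
        have htz : t < fComp S G μ₃ μ (∑ i, GammaSemiring.tmul (b i) (γ i) (v i)) := by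
          refine lt_of_lt_of_le ?_ (le_csSup (fComp_bdd μ₃ μ h31 _) ⟨n, b, v, γ, rfl, rfl⟩)
          refine (Finset.lt_inf'_iff _).mpr fun i _ => lt_min ?_ ?_
          · exact lt_of_lt_of_le (hlt i) (min_le_right _ _)
          · exact lt_of_lt_of_le (hti i) (min_le_right _ _)
        refine lt_of_lt_of_le (lt_min hty htz) ?_
        exact le_csSup (fSum_bdd _ _ (fComp_le_one μ₂ μ h21) x) ⟨_, _, hxyz, rfl⟩
    · exact fSum_nonneg _ _ (fComp_nonneg μ₂ μ h2n hμ0) (fComp_nonneg μ₃ μ h3n hμ0) x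
  · apply Real.sSup_le
    · rintro w ⟨y, z, hxyz, rfl⟩
      apply le_of_forall_lt
      intro t ht
      rcases lt_or_ge t 0 with h | h
      · exact lt_of_lt_of_le h (fComp_nonneg (fSum μ₂ μ₃) μ hσ0 hμ0 x)
      · have hty : t < fComp S G μ₂ μ y := lt_of_lt_of_le ht (min_le_left _ _)
        have htz : t < fComp S G μ₃ μ z := lt_of_lt_of_le ht (min_le_right _ _)
        have hney : Set.Nonempty {r : ℝ | ∃ (n : ℕ) (u v : Fin (n + 1) → S) (γ : Fin (n + 1) → G),
            y = ∑ i, GammaSemiring.tmul (u i) (γ i) (v i) ∧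
            r = Finset.univ.inf' Finset.univ_nonempty (fun i => min (μ₂ (u i)) (μ (v i)))} := by
          by_contra hc
          rw [Set.not_nonempty_iff_eq_empty] at hc
          have : fComp S G μ₂ μ y = 0 := by
            show sSup _ = 0
            rw [hc, Real.sSup_empty]
          rw [this] at hty; linarith
        have hnez : Set.Nonempty {r : ℝ | ∃ (n : ℕ) (u v : Fin (n + 1) → S) (γ : Fin (n + 1) → G),
            z = ∑ i, GammaSemiring.tmul (u i) (γ i) (v i) ∧
            r = Finset.univ.inf' Finset.univ_nonempty (fun i => min (μ₃ (u i)) (μ (v i)))} := by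
          by_contra hc
          rw [Set.not_nonempty_iff_eq_empty] at hc
          have : fComp S G μ₃ μ z = 0 := by
            show sSup _ = 0
            rw [hc, Real.sSup_empty]
          rw [this] at htz; linarith
        obtain ⟨ry, hry, htry⟩ := exists_lt_of_lt_csSup hney hty
        obtain ⟨n₁, a₁, v₁, γ₁, hyrep, rfl⟩ := hry
        obtain ⟨rz, hrz, htrz⟩ := exists_lt_of_lt_csSup hnez htz
        obtain ⟨n₂, a₂, v₂, γ₂, hzrep, rfl⟩ := hrz
        have hcast : (n₁ + n₂ + 1) + 1 = (n₁ + 1) + (n₂ + 1) := by omega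
        have hxrep : x = ∑ i : Fin ((n₁ + n₂ + 1) + 1),
            GammaSemiring.tmul (Fin.append a₁ a₂ (Fin.cast hcast i))
              (Fin.append γ₁ γ₂ (Fin.cast hcast i)) (Fin.append v₁ v₂ (Fin.cast hcast i)) := by
          rw [Fin.sum_congr' (fun j : Fin ((n₁+1)+(n₂+1)) =>
            GammaSemiring.tmul (Fin.append a₁ a₂ j) (Fin.append γ₁ γ₂ j) (Fin.append v₁ v₂ j)) hcast]
          rw [Fin.sum_univ_add]
          simp only [Fin.append_left, Fin.append_right]
          rw [hxyz, hyrep, hzrep]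
        have hkey : ∀ j : Fin ((n₁+1)+(n₂+1)),
            t < min (fSum μ₂ μ₃ (Fin.append a₁ a₂ j)) (μ (Fin.append v₁ v₂ j)) := by
          intro j
          refine Fin.addCases (fun i => ?_) (fun i => ?_) j
          · simp only [Fin.append_left]
            have h1 : t < min (μ₂ (a₁ i)) (μ (v₁ i)) :=
              (Finset.lt_inf'_iff _).mp htry i (Finset.mem_univ i)
            refine lt_min ?_ (lt_of_lt_of_le h1 (min_le_right _ _))
            exact lt_of_lt_of_le (lt_of_lt_of_le h1 (min_le_left _ _))
              (le_fSum_left μ₂ μ₃ h21 h30 (a₁ i))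
          · simp only [Fin.append_right]
            have h1 : t < min (μ₃ (a₂ i)) (μ (v₂ i)) :=
              (Finset.lt_inf'_iff _).mp htrz i (Finset.mem_univ i)
            refine lt_min ?_ (lt_of_lt_of_le h1 (min_le_right _ _))
            exact lt_of_lt_of_le (lt_of_lt_of_le h1 (min_le_left _ _))
              (le_fSum_right μ₂ μ₃ h21 h31 h20 (a₂ i))
        refine lt_of_lt_of_le ?_ (le_csSup (fComp_bdd (fSum μ₂ μ₃) μ hσ1 x)
          ⟨n₁ + n₂ + 1, _, _, _, hxrep, rfl⟩)
        exact (Finset.lt_inf'_iff _).mpr fun i _ => hkey (Fin.cast hcast i)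
    · exact fComp_nonneg (fSum μ₂ μ₃) μ hσ0 hμ0 x

end AuxDistrib

theorem fComp_distrib_fSum {S G : Type*} [AddCommMonoid S] [AddCommMonoid G]
    [GammaSemiring S G] (μ₁ μ₂ μ₃ : S → ℝ)
    (h₁ : IsFuzzyLeftIdeal S G μ₁) (h₂ : IsFuzzyLeftIdeal S G μ₂)
    (h₃ : IsFuzzyLeftIdeal S G μ₃) :
    fComp S G μ₁ (fSum μ₂ μ₃) = fSum (fComp S G μ₁ μ₂) (fComp S G μ₁ μ₃) ∧
    fComp S G (fSum μ₂ μ₃) μ₁ = fSum (fComp S G μ₂ μ₁) (fComp S G μ₃ μ₁) :=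
  ⟨key_left μ₁ μ₂ μ₃ h₁.1 h₂.1 h₃.1 h₂.2.1 h₃.2.1,
   key_right μ₁ μ₂ μ₃ h₁.1 h₂.1 h₃.1 h₂.2.1 h₃.2.1⟩
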